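/- Let σ₁ < 0 < σ₂, ε₁, ε₂ > 0, C₀, c₀ > 0, and v_m ∈ ℝ. Let ṽ₁, ṽ₂ : ℝ → ℝ be differentiable functions such that for all y ∈ ℝ and i = 1, 2: |ṽᵢ'(y)| ≤ C₀ εᵢ² exp(−c₀ εᵢ |y|); 0 ≤ ṽ₁(y) − v_m ≤ C₀ ε₁ for all y, with in addition ṽ₁(y) − v_m ≤ C₀ ε₁ exp(−c₀ ε₁ |y|) for all y ≥ 0; and 0 ≤ ṽ₂(y) − v_m ≤ C₀ ε₂ for all y, with in addition ṽ₂(y) − v_m ≤ C₀ ε₂ exp(−c₀ ε₂ |y|) for all y ≤ 0. Let X₁, X₂ : (0,∞) → ℝ satisfy the separation property X₁(t) + σ₁ t ≤ σ₁ t/2 and X₂(t) + σ₂ t ≥ σ₂ t/2 for all t > 0. Then there exist constants C, c > 0, depending only on C₀, c₀, σ₁, σ₂, such that for every t > 0 and each i = 1, 2: ∫_ℝ |ṽᵢ'(x − σᵢ t − Xᵢ(t))| · |ṽ(t,x) − ṽᵢ(x − σᵢ t − Xᵢ(t))| dx ≤ C ε₁ ε₂ exp(−c · min(ε₁, ε₂)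 · t), where ṽ(t,x) := ṽ₁(x − σ₁ t − X₁(t)) + ṽ₂(x − σ₂ t − X₂(t)) − v_m. -/

import Mathlib

open MeasureTheory Real Set

open Filter Topology

lemma exp_Ioi_int (a : ℝ) (ha : 0 < a) :
    ∫ x in Ioi (0:ℝ), Real.exp (-(a * x)) = 1 / a := by
  have hd : ∀ x ∈ Ioi (0:ℝ), HasDerivAt (fun y => -(Real.exp (-(a*y)) / a)) (Real.exp (-(a*x))) x := by
    intro x _
    have h : HasDerivAt (fun y : ℝ => -(a*y)) (-a) x := by
      simpa [neg_mul] using ((hasDerivAt_id x).const_mul (-a))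
    have : HasDerivAt (fun y => -(Real.exp (-(a*y)) / a)) (-(Real.exp (-(a*x)) * -a / a)) x := (h.exp.div_const a).neg
    convert this using 1
    field_simp
  have hcont : ContinuousWithinAt (fun y => -(Real.exp (-(a*y)) / a)) (Ici 0) 0 :=
    (Continuous.continuousWithinAt (by fun_prop))
  have hint : IntegrableOn (fun x : ℝ => Real.exp (-(a*x))) (Ioi 0) := by
    have := exp_neg_integrableOn_Ioi (0:ℝ) ha
    simpa [neg_mul] using this
  have htend : Tendsto (fun y : ℝ => -(Real.exp (-(a*y)) / a)) atTop (𝓝 (-(0 / a))) := by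
    refine Tendsto.neg (Tendsto.div_const ?_ a)
    have h1 : Tendsto (fun y : ℝ => a * y) atTop atTop :=
      Tendsto.const_mul_atTop ha tendsto_id
    exact tendsto_exp_neg_atTop_nhds_zero.comp h1
  have := integral_Ioi_of_hasDerivAt_of_tendsto hcont hd hint htend
  rw [this]
  simp

lemma exp_abs_integrable (a s : ℝ) (ha : 0 < a) :
    Integrable (fun x : ℝ => Real.exp (-(a * |x - s|))) := by
  have hIoi : IntegrableOn (fun x : ℝ => Real.exp (-(a*|x|))) (Ioi 0) := by
    have h0 : IntegrableOn (fun x : ℝ => Real.exp (-a*x)) (Ioi 0) :=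
      exp_neg_integrableOn_Ioi (0:ℝ) ha
    refine h0.congr_fun (fun x hx => ?_) measurableSet_Ioi
    rw [abs_of_pos hx]; ring_nf
  have hIic : IntegrableOn (fun x : ℝ => Real.exp (-(a*|x|))) (Iic 0) := by
    rw [← Measure.map_neg_eq_self (volume : Measure ℝ)]
    have m : MeasurableEmbedding (fun x : ℝ => -x) :=
      (Homeomorph.neg ℝ).measurableEmbedding
    rw [m.integrableOn_map_iff]
    simp_rw [Function.comp_def, abs_neg, neg_preimage, neg_Iic, neg_zero]
    exact (integrableOn_Ici_iff_integrableOn_Ioi).mpr hIoi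
  have huniv : Integrable (fun x : ℝ => Real.exp (-(a*|x|))) := by
    have := hIic.union hIoi
    rwa [Iic_union_Ioi, integrableOn_univ] at this
  exact huniv.comp_sub_right s

lemma exp_abs_int (a s : ℝ) (ha : 0 < a) :
    ∫ x : ℝ, Real.exp (-(a * |x - s|)) = 2 / a := by
  have h1 : ∫ x : ℝ, Real.exp (-(a * |x - s|))
      = ∫ x : ℝ, Real.exp (-(a * |x|)) :=
    integral_sub_right_eq_self (fun y => Real.exp (-(a * |y|))) s
  rw [h1, integral_comp_abs (f := fun u => Real.exp (-(a*u))), exp_Ioi_int a ha]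
  ring

lemma key_lint (a s M : ℝ) (ha : 0 < a) (hM : 0 ≤ M) (f : ℝ → ℝ)
    (hbd : ∀ x, f x ≤ M * Real.exp (-(a * |x - s|))) :
    ∫⁻ x, ENNReal.ofReal (f x) ≤ ENNReal.ofReal (M * (2 / a)) := by
  have hint : Integrable (fun x : ℝ => M * Real.exp (-(a * |x - s|))) :=
    (exp_abs_integrable a s ha).const_mul M
  calc ∫⁻ x, ENNReal.ofReal (f x)
      ≤ ∫⁻ x, ENNReal.ofReal (M * Real.exp (-(a * |x - s|))) :=
        lintegral_mono fun x => ENNReal.ofReal_le_ofReal (hbd x)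
    _ = ENNReal.ofReal (∫ x : ℝ, M * Real.exp (-(a * |x - s|))) :=
        (ofReal_integral_eq_lintegral_ofReal hint
          (ae_of_all _ fun x => by positivity)).symm
    _ = ENNReal.ofReal (M * (2 / a)) := by
        rw [integral_const_mul, exp_abs_int a s ha]

set_option maxHeartbeats 1200000 in
/-- Lemma 5.4 (estimate (5.16)) of the paper: the interaction between each shifted shock
profile and the composite wave decays exponentially in time, thanks to the separation of
the shifts. -/
theorem wave_interaction_composite
    (σ₁ σ₂ C₀ c₀ : ℝ) (hσ₁ : σ₁ < 0) (hσ₂ : 0 < σ₂) (hC₀ : 0 < C₀) (hc₀ : 0 < c₀) :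
    ∃ C c : ℝ, 0 < C ∧ 0 < c ∧
      ∀ ε₁ ε₂ : ℝ, 0 < ε₁ → 0 < ε₂ →
      ∀ vm : ℝ, ∀ tv₁ tv₂ : ℝ → ℝ,
        Differentiable ℝ tv₁ → Differentiable ℝ tv₂ →
        (∀ y, |deriv tv₁ y| ≤ C₀ * ε₁ ^ 2 * Real.exp (-(c₀ * ε₁ * |y|))) →
        (∀ y, |deriv tv₂ y| ≤ C₀ * ε₂ ^ 2 * Real.exp (-(c₀ * ε₂ * |y|))) →
        (∀ y, 0 ≤ tv₁ y - vm) → (∀ y, tv₁ y - vm ≤ C₀ * ε₁) →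
        (∀ y, 0 ≤ y → tv₁ y - vm ≤ C₀ * ε₁ * Real.exp (-(c₀ * ε₁ * |y|))) →
        (∀ y, 0 ≤ tv₂ y - vm) → (∀ y, tv₂ y - vm ≤ C₀ * ε₂) →
        (∀ y, y ≤ 0 → tv₂ y - vm ≤ C₀ * ε₂ * Real.exp (-(c₀ * ε₂ * |y|))) →
        ∀ X₁ X₂ : ℝ → ℝ,
          (∀ t, 0 < t → X₁ t + σ₁ * t ≤ σ₁ * t / 2) →
          (∀ t, 0 < t → σ₂ * t / 2 ≤ X₂ t + σ₂ * t) →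
          ∀ t, 0 < t →
            ((∫⁻ x : ℝ, ENNReal.ofReal (|deriv tv₁ (x - σ₁ * t - X₁ t)| *
                  |(tv₁ (x - σ₁ * t - X₁ t) + tv₂ (x - σ₂ * t - X₂ t) - vm)
                    - tv₁ (x - σ₁ * t - X₁ t)|))
              ≤ ENNReal.ofReal (C * ε₁ * ε₂ * Real.exp (-(c * min ε₁ ε₂ * t)))) ∧
            ((∫⁻ x : ℝ, ENNReal.ofReal (|deriv tv₂ (x - σ₂ * t - X₂ t)| *
                  |(tv₁ (x - σ₁ * t - X₁ t) + tv₂ (x - σ₂ * t - X₂ t) - vm)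
                    - tv₂ (x - σ₂ * t - X₂ t)|))
              ≤ ENNReal.ofReal (C * ε₁ * ε₂ * Real.exp (-(c * min ε₁ ε₂ * t)))) := by
  have hσ : 0 < σ₂ - σ₁ := by linarith
  refine ⟨4 * C₀ ^ 2 / c₀, c₀ * (σ₂ - σ₁) / 8, by positivity, by positivity, ?_⟩
  intro ε₁ ε₂ hε₁ hε₂ vm tv₁ tv₂ hdf₁ hdf₂ hd1 hd2 h1nn h1ub h1dec h2nn h2ub h2dec
    X₁ X₂ hX₁ hX₂ t ht
  set c : ℝ := c₀ * (σ₂ - σ₁) / 8 with hc_def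
  set m : ℝ := min ε₁ ε₂ with hm_def
  have hm₁ : m ≤ ε₁ := min_le_left _ _
  have hm₂ : m ≤ ε₂ := min_le_right _ _
  have hm0 : 0 < m := lt_min hε₁ hε₂
  set E : ℝ := Real.exp (-(c * m * t)) with hE_def
  have hE0 : 0 < E := Real.exp_pos _
  have hsep : (σ₂ - σ₁) * t / 2 ≤ (σ₂ * t + X₂ t) - (σ₁ * t + X₁ t) := by
    have a1 := hX₁ t ht
    have a2 := hX₂ t ht
    linarith
  constructor
  · -- first integral
    set a : ℝ := c₀ * ε₁ / 2 with ha_def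
    have ha0 : 0 < a := by positivity
    set M : ℝ := C₀ ^ 2 * ε₁ ^ 2 * ε₂ * E with hM_def
    have hM0 : 0 ≤ M := by positivity
    have hbd : ∀ x : ℝ, (|deriv tv₁ (x - σ₁ * t - X₁ t)| *
        |(tv₁ (x - σ₁ * t - X₁ t) + tv₂ (x - σ₂ * t - X₂ t) - vm)
          - tv₁ (x - σ₁ * t - X₁ t)|)
        ≤ M * Real.exp (-(a * |x - (σ₁ * t + X₁ t)|)) := by
      intro x
      set y₁ : ℝ := x - σ₁ * t - X₁ t with hy₁def
      set y₂ : ℝ := x - σ₂ * t - X₂ t with hy₂def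
      have hxy : x - (σ₁ * t + X₁ t) = y₁ := by rw [hy₁def]; ring
      have hsep' : (σ₂ - σ₁) * t / 2 ≤ y₁ - y₂ := by
        rw [hy₁def, hy₂def]; linarith [hsep]
      have habs : |(tv₁ y₁ + tv₂ y₂ - vm) - tv₁ y₁| = tv₂ y₂ - vm := by
        have : (tv₁ y₁ + tv₂ y₂ - vm) - tv₁ y₁ = tv₂ y₂ - vm := by ring
        rw [this, abs_of_nonneg (h2nn y₂)]
      rw [habs, hxy]
      have key : |deriv tv₁ y₁| * (tv₂ y₂ - vm)
          ≤ (C₀ * ε₁ ^ 2 * Real.exp (-(a * |y₁|))) * (C₀ * ε₂ * E) := by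
        by_cases hcase : (σ₂ - σ₁) * t / 4 ≤ y₁
        · -- y₁ far right : decay from deriv factor
          have hy₁abs : (σ₂ - σ₁) * t / 4 ≤ |y₁| := le_trans hcase (le_abs_self _)
          have e1 : Real.exp (-(a * |y₁|)) ≤ E := by
            rw [hE_def]
            apply Real.exp_le_exp.mpr
            have step1 : c₀ * ε₁ / 2 * ((σ₂ - σ₁) * t / 4) ≤ c₀ * ε₁ / 2 * |y₁| :=
              mul_le_mul_of_nonneg_left hy₁abs (by positivity)
            have step2 : c₀ * (σ₂ - σ₁) / 8 * m * t ≤ c₀ * (σ₂ - σ₁) / 8 * ε₁ * t := by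
              apply mul_le_mul_of_nonneg_right _ ht.le
              exact mul_le_mul_of_nonneg_left hm₁ (by positivity)
            have eq1 : c₀ * (σ₂ - σ₁) / 8 * ε₁ * t = c₀ * ε₁ / 2 * ((σ₂ - σ₁) * t / 4) := by
              ring
            rw [hc_def, ha_def]
            linarith
          have hder : |deriv tv₁ y₁| ≤ C₀ * ε₁ ^ 2 * Real.exp (-(a * |y₁|)) * E := by
            have h0 := hd1 y₁
            have hsplit : Real.exp (-(c₀ * ε₁ * |y₁|))
                = Real.exp (-(a * |y₁|)) * Real.exp (-(a * |y₁|)) := by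
              rw [← Real.exp_add]; congr 1; rw [ha_def]; ring
            rw [hsplit] at h0
            calc |deriv tv₁ y₁| ≤ C₀ * ε₁ ^ 2 * (Real.exp (-(a * |y₁|)) * Real.exp (-(a * |y₁|))) := h0
              _ ≤ C₀ * ε₁ ^ 2 * (Real.exp (-(a * |y₁|)) * E) := by
                  apply mul_le_mul_of_nonneg_left _ (by positivity)
                  exact mul_le_mul_of_nonneg_left e1 (Real.exp_pos _).le
              _ = C₀ * ε₁ ^ 2 * Real.exp (-(a * |y₁|)) * E := by ring
          calc |deriv tv₁ y₁| * (tv₂ y₂ - vm)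
              ≤ (C₀ * ε₁ ^ 2 * Real.exp (-(a * |y₁|)) * E) * (C₀ * ε₂) :=
                mul_le_mul hder (h2ub y₂) (h2nn y₂) (by positivity)
            _ = (C₀ * ε₁ ^ 2 * Real.exp (-(a * |y₁|))) * (C₀ * ε₂ * E) := by ring
        · -- y₁ to the left : y₂ very negative, decay from tv₂ factor
          push_neg at hcase
          have hy₂neg : y₂ ≤ -((σ₂ - σ₁) * t / 4) := by linarith
          have hy₂0 : y₂ ≤ 0 := by nlinarith
          have hy₂abs : (σ₂ - σ₁) * t / 4 ≤ |y₂| := by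
            rw [abs_of_nonpos hy₂0]; linarith
          have e2 : Real.exp (-(c₀ * ε₂ * |y₂|)) ≤ E := by
            rw [hE_def]
            apply Real.exp_le_exp.mpr
            have step1 : c₀ * ε₂ * ((σ₂ - σ₁) * t / 4) ≤ c₀ * ε₂ * |y₂| :=
              mul_le_mul_of_nonneg_left hy₂abs (by positivity)
            have step2 : c₀ * (σ₂ - σ₁) / 8 * m * t ≤ c₀ * (σ₂ - σ₁) / 8 * ε₂ * t := by
              apply mul_le_mul_of_nonneg_right _ ht.le
              exact mul_le_mul_of_nonneg_left hm₂ (by positivity)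
            have eq1 : c₀ * (σ₂ - σ₁) / 4 * ε₂ * t = c₀ * ε₂ * ((σ₂ - σ₁) * t / 4) := by
              ring
            rw [hc_def]
            nlinarith [mul_pos (mul_pos hc₀ hσ) (mul_pos hm0 ht)]
          have htv2 : tv₂ y₂ - vm ≤ C₀ * ε₂ * E :=
            le_trans (h2dec y₂ hy₂0)
              (mul_le_mul_of_nonneg_left e2 (by positivity))
          have hder : |deriv tv₁ y₁| ≤ C₀ * ε₁ ^ 2 * Real.exp (-(a * |y₁|)) := by
            refine le_trans (hd1 y₁) ?_
            apply mul_le_mul_of_nonneg_left _ (by positivity)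
            apply Real.exp_le_exp.mpr
            rw [ha_def]
            nlinarith [abs_nonneg y₁, mul_nonneg hc₀.le (mul_nonneg hε₁.le (abs_nonneg y₁))]
          exact mul_le_mul hder htv2 (h2nn y₂) (by positivity)
      calc |deriv tv₁ y₁| * (tv₂ y₂ - vm)
          ≤ (C₀ * ε₁ ^ 2 * Real.exp (-(a * |y₁|))) * (C₀ * ε₂ * E) := key
        _ = M * Real.exp (-(a * |y₁|)) := by rw [hM_def]; ring
    refine le_trans (key_lint a (σ₁ * t + X₁ t) M ha0 hM0 _ hbd) (le_of_eq ?_)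
    congr 1
    rw [hM_def, ha_def, hE_def, hc_def, hm_def]
    field_simp
    ring
  · -- second integral
    set a : ℝ := c₀ * ε₂ / 2 with ha_def
    have ha0 : 0 < a := by positivity
    set M : ℝ := C₀ ^ 2 * ε₂ ^ 2 * ε₁ * E with hM_def
    have hM0 : 0 ≤ M := by positivity
    have hbd : ∀ x : ℝ, (|deriv tv₂ (x - σ₂ * t - X₂ t)| *
        |(tv₁ (x - σ₁ * t - X₁ t) + tv₂ (x - σ₂ * t - X₂ t) - vm)
          - tv₂ (x - σ₂ * t - X₂ t)|)
        ≤ M * Real.exp (-(a * |x - (σ₂ * t + X₂ t)|)) := by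
      intro x
      set y₁ : ℝ := x - σ₁ * t - X₁ t with hy₁def
      set y₂ : ℝ := x - σ₂ * t - X₂ t with hy₂def
      have hxy : x - (σ₂ * t + X₂ t) = y₂ := by rw [hy₂def]; ring
      have hsep' : (σ₂ - σ₁) * t / 2 ≤ y₁ - y₂ := by
        rw [hy₁def, hy₂def]; linarith [hsep]
      have habs : |(tv₁ y₁ + tv₂ y₂ - vm) - tv₂ y₂| = tv₁ y₁ - vm := by
        have : (tv₁ y₁ + tv₂ y₂ - vm) - tv₂ y₂ = tv₁ y₁ - vm := by ring
        rw [this, abs_of_nonneg (h1nn y₁)]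
      rw [habs, hxy]
      have key : |deriv tv₂ y₂| * (tv₁ y₁ - vm)
          ≤ (C₀ * ε₂ ^ 2 * Real.exp (-(a * |y₂|))) * (C₀ * ε₁ * E) := by
        by_cases hcase : y₂ ≤ -((σ₂ - σ₁) * t / 4)
        · -- y₂ far left : decay from deriv factor
          have hy₂abs : (σ₂ - σ₁) * t / 4 ≤ |y₂| := by
            have hy₂0 : y₂ ≤ 0 := by nlinarith
            rw [abs_of_nonpos hy₂0]; linarith
          have e1 : Real.exp (-(a * |y₂|)) ≤ E := by
            rw [hE_def]
            apply Real.exp_le_exp.mpr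
            have step1 : c₀ * ε₂ / 2 * ((σ₂ - σ₁) * t / 4) ≤ c₀ * ε₂ / 2 * |y₂| :=
              mul_le_mul_of_nonneg_left hy₂abs (by positivity)
            have step2 : c₀ * (σ₂ - σ₁) / 8 * m * t ≤ c₀ * (σ₂ - σ₁) / 8 * ε₂ * t := by
              apply mul_le_mul_of_nonneg_right _ ht.le
              exact mul_le_mul_of_nonneg_left hm₂ (by positivity)
            have eq1 : c₀ * (σ₂ - σ₁) / 8 * ε₂ * t = c₀ * ε₂ / 2 * ((σ₂ - σ₁) * t / 4) := by
              ring
            rw [hc_def, ha_def]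
            linarith
          have hder : |deriv tv₂ y₂| ≤ C₀ * ε₂ ^ 2 * Real.exp (-(a * |y₂|)) * E := by
            have h0 := hd2 y₂
            have hsplit : Real.exp (-(c₀ * ε₂ * |y₂|))
                = Real.exp (-(a * |y₂|)) * Real.exp (-(a * |y₂|)) := by
              rw [← Real.exp_add]; congr 1; rw [ha_def]; ring
            rw [hsplit] at h0
            calc |deriv tv₂ y₂| ≤ C₀ * ε₂ ^ 2 * (Real.exp (-(a * |y₂|)) * Real.exp (-(a * |y₂|))) := h0
              _ ≤ C₀ * ε₂ ^ 2 * (Real.exp (-(a * |y₂|)) * E) := by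
                  apply mul_le_mul_of_nonneg_left _ (by positivity)
                  exact mul_le_mul_of_nonneg_left e1 (Real.exp_pos _).le
              _ = C₀ * ε₂ ^ 2 * Real.exp (-(a * |y₂|)) * E := by ring
          calc |deriv tv₂ y₂| * (tv₁ y₁ - vm)
              ≤ (C₀ * ε₂ ^ 2 * Real.exp (-(a * |y₂|)) * E) * (C₀ * ε₁) :=
                mul_le_mul hder (h1ub y₁) (h1nn y₁) (by positivity)
            _ = (C₀ * ε₂ ^ 2 * Real.exp (-(a * |y₂|))) * (C₀ * ε₁ * E) := by ring
        · -- y₂ to the right : y₁ far right, decay from tv₁ factor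
          push_neg at hcase
          have hy₁pos : (σ₂ - σ₁) * t / 4 ≤ y₁ := by linarith
          have hy₁0 : 0 ≤ y₁ := by nlinarith
          have hy₁abs : (σ₂ - σ₁) * t / 4 ≤ |y₁| := le_trans hy₁pos (le_abs_self _)
          have e2 : Real.exp (-(c₀ * ε₁ * |y₁|)) ≤ E := by
            rw [hE_def]
            apply Real.exp_le_exp.mpr
            have step1 : c₀ * ε₁ * ((σ₂ - σ₁) * t / 4) ≤ c₀ * ε₁ * |y₁| :=
              mul_le_mul_of_nonneg_left hy₁abs (by positivity)
            have step2 : c₀ * (σ₂ - σ₁) / 8 * m * t ≤ c₀ * (σ₂ - σ₁) / 8 * ε₁ * t := by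
              apply mul_le_mul_of_nonneg_right _ ht.le
              exact mul_le_mul_of_nonneg_left hm₁ (by positivity)
            rw [hc_def]
            nlinarith [mul_pos (mul_pos hc₀ hσ) (mul_pos hm0 ht)]
          have htv1 : tv₁ y₁ - vm ≤ C₀ * ε₁ * E :=
            le_trans (h1dec y₁ hy₁0)
              (mul_le_mul_of_nonneg_left e2 (by positivity))
          have hder : |deriv tv₂ y₂| ≤ C₀ * ε₂ ^ 2 * Real.exp (-(a * |y₂|)) := by
            refine le_trans (hd2 y₂) ?_
            apply mul_le_mul_of_nonneg_left _ (by positivity)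
            apply Real.exp_le_exp.mpr
            rw [ha_def]
            nlinarith [abs_nonneg y₂, mul_nonneg hc₀.le (mul_nonneg hε₂.le (abs_nonneg y₂))]
          exact mul_le_mul hder htv1 (h1nn y₁) (by positivity)
      calc |deriv tv₂ y₂| * (tv₁ y₁ - vm)
          ≤ (C₀ * ε₂ ^ 2 * Real.exp (-(a * |y₂|))) * (C₀ * ε₁ * E) := key
        _ = M * Real.exp (-(a * |y₂|)) := by rw [hM_def]; ring
    refine le_trans (key_lint a (σ₂ * t + X₂ t) M ha0 hM0 _ hbd) (le_of_eq ?_)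
    congr 1
    rw [hM_def, ha_def, hE_def, hc_def, hm_def]
    field_simp
    ring
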